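/- (Baire category theorem for cone Banach spaces) Let (X, ‖·‖_p) be a cone Banach space over (E, P), where P is normal with normal constant M > 0. If (A_n)_{n∈ℕ} is a sequence of subsets of X, each of which is open and dense with respect to the cone topology, then the intersection ⋂_{n∈ℕ} A_n is dense in X with respect to the cone topology. -/

import Mathlib

open Set

section ConeDefs

variable {E : Type*} [NormedAddCommGroup E] [NormedSpace ℝ E]

/-- `a ≤ b` with respect to the cone `P`: `b - a ∈ P`. -/
def coneLE (P : Set E) (a b : E) : Prop := b - a ∈ P

/-- `a ≪ b` with respect to the cone `P`: `b - a ∈ interior P`. -/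
def coneLT (P : Set E) (a b : E) : Prop := b - a ∈ interior P

/-- `P` is a cone in the real Banach space `E`. -/
def IsCone (P : Set E) : Prop :=
  IsClosed P ∧ P.Nonempty ∧ P ≠ {0} ∧
    (∀ x ∈ P, ∀ y ∈ P, ∀ a b : ℝ, 0 ≤ a → 0 ≤ b → a • x + b • y ∈ P) ∧
    P ∩ (-P) = {0}

/-- `P` is a normal cone with normal constant `M`. -/
def IsNormalConst (P : Set E) (M : ℝ) : Prop :=
  0 < M ∧ ∀ a b : E, coneLE P 0 a → coneLE P a b → ‖a‖ ≤ M * ‖b‖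

/-- `n : X → E` is a cone norm on `X` with respect to the cone `P ⊆ E`. -/
def IsConeNorm {X : Type*} [AddCommGroup X] [Module ℝ X] (P : Set E) (n : X → E) : Prop :=
  (∀ x, coneLE P 0 (n x)) ∧ (∀ x, n x = 0 ↔ x = 0) ∧
    (∀ (α : ℝ) (x : X), n (α • x) = |α| • n x) ∧
    (∀ x y, coneLE P (n (x + y)) (n x + n y))

/-- Convergence of a sequence in a cone normed space. -/
def ConeConv {X : Type*} [AddCommGroup X] [Module ℝ X] (P : Set E) (n : X → E)
    (x : ℕ → X) (x₀ : X) : Prop :=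
  ∀ c : E, coneLT P 0 c → ∃ N : ℕ, ∀ k ≥ N, coneLT P (n (x k - x₀)) c

/-- A sequence in a cone normed space is Cauchy. -/
def ConeCauchy {X : Type*} [AddCommGroup X] [Module ℝ X] (P : Set E) (n : X → E)
    (x : ℕ → X) : Prop :=
  ∀ c : E, coneLT P 0 c → ∃ N : ℕ, ∀ k ≥ N, ∀ m ≥ N, coneLT P (n (x k - x m)) c

/-- A cone normed space is a cone Banach space if every Cauchy sequence converges. -/
def ConeComplete {X : Type*} [AddCommGroup X] [Module ℝ X] (P : Set E) (n : X → E) : Prop :=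
  ∀ x : ℕ → X, ConeCauchy P n x → ∃ x₀ : X, ConeConv P n x x₀

/-- The ball `B_c(x) = {y : ‖x - y‖_p ≪ c}`. -/
def coneBall {X : Type*} [AddCommGroup X] [Module ℝ X] (P : Set E) (n : X → E)
    (x : X) (c : E) : Set X :=
  {y | coneLT P (n (x - y)) c}

/-- The cone topology: generated by the sub-basis of all balls `B_c(x)`, `0 ≪ c`. -/
def coneTopology {X : Type*} [AddCommGroup X] [Module ℝ X] (P : Set E) (n : X → E) :
    TopologicalSpace X :=
  TopologicalSpace.generateFrom {s | ∃ x c, coneLT P 0 c ∧ s = coneBall P n x c}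

/-- A subset `A ⊆ E` is upper bounded with respect to the cone `P`. -/
def ConeUpperBounded (P : Set E) (A : Set E) : Prop :=
  ∃ t : E, coneLE P 0 t ∧ ∀ a ∈ A, coneLE P a t

/-- `P` has the supremum property: every upper bounded subset of `P`
has a least upper bound in `P` (least among the nonnegative upper bounds). -/
def SupremumProperty (P : Set E) : Prop :=
  ∀ A ⊆ P, ConeUpperBounded P A →
    ∃ s ∈ P, (∀ a ∈ A, coneLE P a s) ∧
      ∀ t : E, coneLE P 0 t → (∀ a ∈ A, coneLE P a t) → coneLE P s t

end ConeDefs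

namespace ConeBaire

section Aux

variable {E : Type*} [NormedAddCommGroup E] [NormedSpace ℝ E]

theorem add_mem {P : Set E} (hP : IsCone P) {x y : E} (hx : x ∈ P) (hy : y ∈ P) :
    x + y ∈ P := by
  simpa using hP.2.2.2.1 x hx y hy 1 1 zero_le_one zero_le_one

theorem smul_mem {P : Set E} (hP : IsCone P) {t : ℝ} (ht : 0 ≤ t) {x : E} (hx : x ∈ P) :
    t • x ∈ P := by
  simpa using hP.2.2.2.1 x hx x hx t 0 ht le_rfl

theorem int_add_mem {P : Set E} (hP : IsCone P) {u p : E}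
    (hu : u ∈ interior P) (hp : p ∈ P) : u + p ∈ interior P := by
  have hsub : (fun w => w - p) ⁻¹' interior P ⊆ P := fun w hw => by
    have h1 : w - p ∈ P := interior_subset hw
    simpa using add_mem hP h1 hp
  have hopen : IsOpen ((fun w => w - p) ⁻¹' interior P) :=
    isOpen_interior.preimage (continuous_id.sub continuous_const)
  have hmem : u + p ∈ (fun w => w - p) ⁻¹' interior P := by simpa using hu
  exact interior_maximal hsub hopen hmem

theorem smul_int_mem {P : Set E} (hP : IsCone P) {t : ℝ} (ht : 0 < t) {u : E}
    (hu : u ∈ interior P) : t • u ∈ interior P := by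
  have hsub : (fun w => t⁻¹ • w) ⁻¹' interior P ⊆ P := fun w hw => by
    have h1 : t⁻¹ • w ∈ P := interior_subset hw
    have h2 := smul_mem hP ht.le h1
    rwa [smul_inv_smul₀ ht.ne'] at h2
  have hopen : IsOpen ((fun w => t⁻¹ • w) ⁻¹' interior P) :=
    isOpen_interior.preimage (continuous_const_smul _)
  have hmem : t • u ∈ (fun w => t⁻¹ • w) ⁻¹' interior P := by
    show t⁻¹ • (t • u) ∈ interior P
    rw [inv_smul_smul₀ ht.ne']
    exact hu
  exact interior_maximal hsub hopen hmem

theorem pos_iff {P : Set E} {c : E} : coneLT P 0 c ↔ c ∈ interior P := by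
  rw [coneLT, sub_zero]

theorem le_trans' {P : Set E} (hP : IsCone P) {a b c : E}
    (h1 : coneLE P a b) (h2 : coneLE P b c) : coneLE P a c := by
  have h : c - a = (b - a) + (c - b) := by abel
  rw [coneLE, h]
  exact add_mem hP h1 h2

theorem le_of_lt' {P : Set E} {a b : E} (h : coneLT P a b) : coneLE P a b :=
  interior_subset h

theorem lt_of_le_lt {P : Set E} (hP : IsCone P) {a b c : E}
    (h1 : coneLE P a b) (h2 : coneLT P b c) : coneLT P a c := by
  have h : c - a = (c - b) + (b - a) := by abel
  rw [coneLT, h]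
  exact int_add_mem hP h2 h1

theorem lt_of_lt_le {P : Set E} (hP : IsCone P) {a b c : E}
    (h1 : coneLT P a b) (h2 : coneLE P b c) : coneLT P a c := by
  have h : c - a = (b - a) + (c - b) := by abel
  rw [coneLT, h]
  exact int_add_mem hP h1 h2

theorem add_le_add' {P : Set E} (hP : IsCone P) {a b a' b' : E}
    (h1 : coneLE P a b) (h2 : coneLE P a' b') : coneLE P (a + a') (b + b') := by
  have h : (b + b') - (a + a') = (b - a) + (b' - a') := by abel
  rw [coneLE, h]
  exact add_mem hP h1 h2

theorem add_lt_left {P : Set E} {a b t : E} (h : coneLT P a b) :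
    coneLT P (t + a) (t + b) := by
  have heq : (t + b) - (t + a) = b - a := by abel
  rw [coneLT, heq]
  exact h

theorem smul_le_smul' {P : Set E} (hP : IsCone P) {a b : E} {t : ℝ}
    (ht : 0 ≤ t) (h : coneLE P a b) : coneLE P (t • a) (t • b) := by
  rw [coneLE, ← smul_sub]
  exact smul_mem hP ht h

theorem cone_min {P : Set E} (hP : IsCone P) {d₁ d₂ : E}
    (h₁ : coneLT P 0 d₁) (h₂ : coneLT P 0 d₂) :
    ∃ c, coneLT P 0 c ∧ coneLE P c d₁ ∧ coneLE P c d₂ := by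
  rw [pos_iff] at h₁ h₂
  have hcont : Filter.Tendsto (fun t : ℝ => d₁ - t • d₂) (nhds 0) (nhds d₁) := by
    have hc : Continuous (fun t : ℝ => d₁ - t • d₂) :=
      continuous_const.sub (continuous_id.smul continuous_const)
    have := hc.tendsto 0
    simpa using this
  have hev : ∀ᶠ t : ℝ in nhds 0, d₁ - t • d₂ ∈ interior P :=
    hcont.eventually (isOpen_interior.eventually_mem h₁)
  obtain ⟨ε, hε, hball⟩ := Metric.eventually_nhds_iff.mp hev
  set δ : ℝ := min (ε / 2) (1 / 2) with hδdef
  have hδpos : 0 < δ := lt_min (by linarith) (by norm_num)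
  have hδlt : δ < 1 := lt_of_le_of_lt (min_le_right _ _) (by norm_num)
  have hδε : dist δ 0 < ε := by
    rw [Real.dist_eq, sub_zero, abs_of_pos hδpos]
    exact lt_of_le_of_lt (min_le_left _ _) (by linarith)
  have hmem := hball hδε
  refine ⟨δ • d₂, ?_, ?_, ?_⟩
  · rw [pos_iff]
    exact smul_int_mem hP hδpos h₂
  · exact interior_subset hmem
  · show d₂ - δ • d₂ ∈ P
    have heq : d₂ - δ • d₂ = (1 - δ) • d₂ := by rw [sub_smul, one_smul]
    rw [heq]
    exact smul_mem hP (by linarith) (interior_subset h₂)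

theorem exists_pow_lt {P : Set E} {c₀ e : E} (he : e ∈ interior P) :
    ∃ N : ℕ, e - (2⁻¹ : ℝ) ^ N • c₀ ∈ interior P := by
  have h1 : Filter.Tendsto (fun N : ℕ => ((2⁻¹ : ℝ) ^ N)) Filter.atTop (nhds 0) :=
    tendsto_pow_atTop_nhds_zero_of_lt_one (by norm_num) (by norm_num)
  have h2 : Filter.Tendsto (fun N : ℕ => (2⁻¹ : ℝ) ^ N • c₀) Filter.atTop (nhds 0) := by
    have := h1.smul_const c₀
    simpa using this
  have h3 : Filter.Tendsto (fun N : ℕ => e - (2⁻¹ : ℝ) ^ N • c₀) Filter.atTop (nhds e) := by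
    have h4 : Filter.Tendsto (fun _ : ℕ => e) Filter.atTop (nhds e) := tendsto_const_nhds
    have := h4.sub h2
    simpa using this
  exact (h3.eventually (isOpen_interior.eventually_mem he)).exists

variable {X : Type*} [AddCommGroup X] [Module ℝ X]

theorem norm_zero' {P : Set E} {nX : X → E} (hnX : IsConeNorm P nX) : nX 0 = 0 :=
  (hnX.2.1 0).mpr rfl

theorem norm_symm {P : Set E} {nX : X → E} (hnX : IsConeNorm P nX) (a b : X) :
    nX (a - b) = nX (b - a) := by
  have h := hnX.2.2.1 (-1) (b - a)
  have h1 : (-1 : ℝ) • (b - a) = a - b := by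
    rw [neg_smul, one_smul, neg_sub]
  rw [h1] at h
  simpa using h

theorem norm_triangle {P : Set E} {nX : X → E} (hnX : IsConeNorm P nX) (a b c : X) :
    coneLE P (nX (a - c)) (nX (a - b) + nX (b - c)) := by
  have h := hnX.2.2.2 (a - b) (b - c)
  rwa [sub_add_sub_cancel] at h

theorem mem_ball_self {P : Set E} {nX : X → E} (hnX : IsConeNorm P nX) {x : X} {c : E}
    (hc : coneLT P 0 c) : x ∈ coneBall P nX x c := by
  show coneLT P (nX (x - x)) c
  rw [sub_self, norm_zero' hnX]
  exact hc

theorem exists_ball_subset {P : Set E} (hP : IsCone P) (hint : (interior P).Nonempty)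
    {nX : X → E} (hnX : IsConeNorm P nX) {U : Set X}
    (hU : TopologicalSpace.GenerateOpen
      {s | ∃ x c, coneLT P 0 c ∧ s = coneBall P nX x c} U) :
    ∀ x ∈ U, ∃ c, coneLT P 0 c ∧ coneBall P nX x c ⊆ U := by
  induction hU with
  | basic s hs =>
    obtain ⟨y, c, hc, rfl⟩ := hs
    intro x hx
    refine ⟨c - nX (y - x), by rw [pos_iff]; exact hx, ?_⟩
    intro z hz
    have tri : coneLE P (nX (y - z)) (nX (y - x) + nX (x - z)) := norm_triangle hnX y x z
    have hlt : coneLT P (nX (y - x) + nX (x - z)) (nX (y - x) + (c - nX (y - x))) :=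
      add_lt_left hz
    rw [add_sub_cancel] at hlt
    exact lt_of_le_lt hP tri hlt
  | univ =>
    intro x _
    obtain ⟨c, hc⟩ := hint
    exact ⟨c, by rw [pos_iff]; exact hc, fun _ _ => trivial⟩
  | inter s t hs ht ihs iht =>
    intro x hx
    obtain ⟨c₁, hc₁, h₁⟩ := ihs x hx.1
    obtain ⟨c₂, hc₂, h₂⟩ := iht x hx.2
    obtain ⟨c, hc, hle₁, hle₂⟩ := cone_min hP hc₁ hc₂
    exact ⟨c, hc, fun z hz => ⟨h₁ (lt_of_lt_le hP hz hle₁), h₂ (lt_of_lt_le hP hz hle₂)⟩⟩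
  | sUnion S hS ih =>
    intro x hx
    obtain ⟨t, htS, hxt⟩ := hx
    obtain ⟨c, hc, hsub⟩ := ih t htS x hxt
    exact ⟨c, hc, hsub.trans (Set.subset_sUnion_of_mem htS)⟩

end Aux

end ConeBaire

/-- Baire category theorem for cone Banach spaces:
in a cone Banach space, a countable intersection of dense open sets
(with respect to the cone topology) is dense. -/
theorem cone_baire_category
    {E : Type*} [NormedAddCommGroup E] [NormedSpace ℝ E] [CompleteSpace E]
    {X : Type*} [AddCommGroup X] [Module ℝ X]
    (P : Set E) (hP : IsCone P) (hint : (interior P).Nonempty)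
    (M : ℝ) (hM : IsNormalConst P M)
    (nX : X → E) (hnX : IsConeNorm P nX) (hcomplete : ConeComplete P nX)
    (A : ℕ → Set X)
    (hopen : ∀ k, @IsOpen X (coneTopology P nX) (A k))
    (hdense : ∀ k, @Dense X (coneTopology P nX) (A k)) :
    @Dense X (coneTopology P nX) (⋂ k, A k) := by
  classical
  letI : TopologicalSpace X := coneTopology P nX
  have h0P : (0 : E) ∈ P := by
    obtain ⟨w, hw⟩ := hP.2.1
    simpa using ConeBaire.smul_mem hP (le_refl (0 : ℝ)) hw
  have hGen : ∀ {U : Set X}, IsOpen U →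
      ∀ x ∈ U, ∃ c, coneLT P 0 c ∧ coneBall P nX x c ⊆ U := by
    intro U hU
    exact ConeBaire.exists_ball_subset hP hint hnX hU
  have hBallOpen : ∀ (x : X) (c : E), coneLT P 0 c → IsOpen (coneBall P nX x c) := by
    intro x c hc
    exact TopologicalSpace.GenerateOpen.basic _ ⟨x, c, hc, rfl⟩
  rw [dense_iff_inter_open]
  rintro U hUopen ⟨x, hx⟩
  obtain ⟨c₀, hc₀, hball₀⟩ := hGen hUopen x hx
  -- the inductive construction step
  have hstep : ∀ (k : ℕ) (p : X × E), coneLT P 0 p.2 →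
      ∃ q : X × E, coneLT P 0 q.2 ∧ coneLE P q.2 ((2⁻¹ : ℝ) • p.2) ∧
        {y : X | coneLE P (nX (q.1 - y)) q.2} ⊆ A k ∩ coneBall P nX p.1 p.2 := by
    intro k p hp
    have hBopen : IsOpen (A k ∩ coneBall P nX p.1 p.2) :=
      (hopen k).inter (hBallOpen p.1 p.2 hp)
    have hBne : (A k ∩ coneBall P nX p.1 p.2).Nonempty := by
      obtain ⟨y, hy1, hy2⟩ := (hdense k).inter_open_nonempty _ (hBallOpen p.1 p.2 hp)
        ⟨p.1, ConeBaire.mem_ball_self hnX hp⟩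
      exact ⟨y, hy2, hy1⟩
    obtain ⟨x', hx'⟩ := hBne
    obtain ⟨d, hd, hdsub⟩ := hGen hBopen x' hx'
    have hd2 : coneLT P 0 ((2⁻¹ : ℝ) • d) := by
      rw [ConeBaire.pos_iff] at hd ⊢
      exact ConeBaire.smul_int_mem hP (by norm_num) hd
    have hp2 : coneLT P 0 ((2⁻¹ : ℝ) • p.2) := by
      rw [ConeBaire.pos_iff] at hp ⊢
      exact ConeBaire.smul_int_mem hP (by norm_num) hp
    obtain ⟨c', hc', hle₁, hle₂⟩ := ConeBaire.cone_min hP hd2 hp2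
    refine ⟨(x', c'), hc', hle₂, ?_⟩
    intro y hy
    apply hdsub
    have hlt : coneLT P ((2⁻¹ : ℝ) • d) d := by
      have heq : d - (2⁻¹ : ℝ) • d = ((1 : ℝ) - 2⁻¹) • d := by rw [sub_smul, one_smul]
      have heq2 : ((1 : ℝ) - 2⁻¹) = (2⁻¹ : ℝ) := by norm_num
      rw [coneLT, heq, heq2]
      rw [ConeBaire.pos_iff] at hd2
      exact hd2
    exact ConeBaire.lt_of_le_lt hP hy (ConeBaire.lt_of_le_lt hP hle₁ hlt)
  have hstep' : ∀ (k : ℕ) (p : {p : X × E // coneLT P 0 p.2}),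
      ∃ q : {p : X × E // coneLT P 0 p.2},
        coneLE P q.1.2 ((2⁻¹ : ℝ) • p.1.2) ∧
        {y : X | coneLE P (nX (q.1.1 - y)) q.1.2} ⊆ A k ∩ coneBall P nX p.1.1 p.1.2 := by
    intro k p
    obtain ⟨q, hq1, hq2, hq3⟩ := hstep k p.1 p.2
    exact ⟨⟨q, hq1⟩, hq2, hq3⟩
  let g : ℕ → {p : X × E // coneLT P 0 p.2} := fun n =>
    Nat.rec ⟨(x, c₀), hc₀⟩ (fun k ih => Classical.choose (hstep' k ih)) n
  have hg : ∀ k, coneLE P (g (k+1)).1.2 ((2⁻¹ : ℝ) • (g k).1.2) ∧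
      {y : X | coneLE P (nX ((g (k+1)).1.1 - y)) (g (k+1)).1.2} ⊆
        A k ∩ coneBall P nX (g k).1.1 (g k).1.2 :=
    fun k => Classical.choose_spec (hstep' k (g k))
  let xs : ℕ → X := fun n => (g n).1.1
  let cs : ℕ → E := fun n => (g n).1.2
  have hpos : ∀ n, coneLT P 0 (cs n) := fun n => (g n).2
  have hx0 : xs 0 = x := rfl
  have hc0 : cs 0 = c₀ := rfl
  let K : ℕ → Set X := fun n => {y : X | coneLE P (nX (xs n - y)) (cs n)}
  have hKA : ∀ n, K (n+1) ⊆ A n ∩ coneBall P nX (xs n) (cs n) := fun n => (hg n).2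
  have hhalf : ∀ n, coneLE P (cs (n+1)) ((2⁻¹ : ℝ) • cs n) := fun n => (hg n).1
  have hself : ∀ n, xs n ∈ K n := by
    intro n
    show coneLE P (nX (xs n - xs n)) (cs n)
    rw [sub_self, ConeBaire.norm_zero' hnX]
    exact ConeBaire.le_of_lt' (hpos n)
  have hKmono : ∀ n, K (n+1) ⊆ K n := by
    intro n y hy
    exact ConeBaire.le_of_lt' (hKA n hy).2
  have hKle : ∀ n m, n ≤ m → K m ⊆ K n := by
    intro n m h
    induction m with
    | zero =>
      have hn : n = 0 := Nat.le_zero.mp h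
      subst hn; exact subset_rfl
    | succ m ih =>
      rcases eq_or_lt_of_le h with heq | hlt
      · subst heq; exact subset_rfl
      · exact (hKmono m).trans (ih (Nat.lt_succ_iff.mp hlt))
  have hxsK : ∀ n m, n ≤ m → xs m ∈ K n := fun n m h => hKle n m h (hself m)
  have hcsle : ∀ n, coneLE P (cs (n+1)) (cs n) := by
    intro n
    refine ConeBaire.le_trans' hP (hhalf n) ?_
    show cs n - (2⁻¹ : ℝ) • cs n ∈ P
    have heq : cs n - (2⁻¹ : ℝ) • cs n = ((1 : ℝ) - 2⁻¹) • cs n := by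
      rw [sub_smul, one_smul]
    rw [heq]
    exact ConeBaire.smul_mem hP (by norm_num)
      (interior_subset (ConeBaire.pos_iff.mp (hpos n)))
  have hcsle' : ∀ n m, n ≤ m → coneLE P (cs m) (cs n) := by
    intro n m h
    induction m with
    | zero =>
      have hn : n = 0 := Nat.le_zero.mp h
      subst hn
      rw [coneLE, sub_self]; exact h0P
    | succ m ih =>
      rcases eq_or_lt_of_le h with heq | hlt
      · subst heq; rw [coneLE, sub_self]; exact h0P
      · exact ConeBaire.le_trans' hP (hcsle m) (ih (Nat.lt_succ_iff.mp hlt))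
  have hgeo : ∀ n, coneLE P (cs n) ((2⁻¹ : ℝ) ^ n • c₀) := by
    intro n
    induction n with
    | zero =>
      rw [pow_zero, one_smul, coneLE, hc0, sub_self]; exact h0P
    | succ n ih =>
      refine ConeBaire.le_trans' hP (hhalf n) ?_
      have h2 := ConeBaire.smul_le_smul' hP (by norm_num : (0:ℝ) ≤ 2⁻¹) ih
      have heq : (2⁻¹ : ℝ) • ((2⁻¹ : ℝ) ^ n • c₀) = (2⁻¹ : ℝ) ^ (n+1) • c₀ := by
        rw [smul_smul]
        congr 1
        ring
      rwa [heq] at h2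
  have hcauchy : ConeCauchy P nX xs := by
    intro e he
    rw [ConeBaire.pos_iff] at he
    obtain ⟨N, hN⟩ := ConeBaire.exists_pow_lt (c₀ := c₀) he
    refine ⟨N, ?_⟩
    intro k hk m hm
    have hbound : coneLE P (nX (xs k - xs m)) (cs N) := by
      rcases le_total k m with h | h
      · exact ConeBaire.le_trans' hP (hxsK k m h) (hcsle' N k hk)
      · have h1 : coneLE P (nX (xs m - xs k)) (cs m) := hxsK m k h
        have h2 : nX (xs k - xs m) = nX (xs m - xs k) := ConeBaire.norm_symm hnX _ _
        rw [h2]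
        exact ConeBaire.le_trans' hP h1 (hcsle' N m hm)
    have hLT : coneLT P ((2⁻¹ : ℝ) ^ N • c₀) e := hN
    exact ConeBaire.lt_of_le_lt hP (ConeBaire.le_trans' hP hbound (hgeo N)) hLT
  obtain ⟨x₀, hconv⟩ := hcomplete xs hcauchy
  have hc₀P : c₀ ∈ interior P := ConeBaire.pos_iff.mp hc₀
  have hlimK : ∀ n, x₀ ∈ K n := by
    intro n
    show coneLE P (nX (xs n - x₀)) (cs n)
    have hseq : ∀ j : ℕ, cs n - nX (xs n - x₀) + ((j : ℝ) + 1)⁻¹ • c₀ ∈ P := by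
      intro j
      have hej : coneLT P 0 (((j : ℝ) + 1)⁻¹ • c₀) := by
        rw [ConeBaire.pos_iff]
        exact ConeBaire.smul_int_mem hP (by positivity) hc₀P
      obtain ⟨Nj, hNj⟩ := hconv _ hej
      have h1 : coneLT P (nX (xs (max Nj n) - x₀)) (((j : ℝ) + 1)⁻¹ • c₀) :=
        hNj (max Nj n) (le_max_left _ _)
      have h2 : coneLE P (nX (xs n - xs (max Nj n))) (cs n) :=
        hxsK n (max Nj n) (le_max_right _ _)
      have tri := ConeBaire.norm_triangle hnX (xs n) (xs (max Nj n)) x₀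
      have h3 := ConeBaire.add_le_add' hP h2 (ConeBaire.le_of_lt' h1)
      have h4 := ConeBaire.le_trans' hP tri h3
      have heq : cs n - nX (xs n - x₀) + ((j : ℝ) + 1)⁻¹ • c₀
          = (cs n + ((j : ℝ) + 1)⁻¹ • c₀) - nX (xs n - x₀) := by abel
      rw [heq]
      exact h4
    have htend : Filter.Tendsto
        (fun j : ℕ => cs n - nX (xs n - x₀) + ((j : ℝ) + 1)⁻¹ • c₀)
        Filter.atTop (nhds (cs n - nX (xs n - x₀))) := by
      have h1 : Filter.Tendsto (fun j : ℕ => (((j : ℝ) + 1)⁻¹)) Filter.atTop (nhds 0) := by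
        have := tendsto_one_div_add_atTop_nhds_zero_nat (𝕜 := ℝ)
        simpa [one_div] using this
      have h2 : Filter.Tendsto (fun j : ℕ => ((j : ℝ) + 1)⁻¹ • c₀) Filter.atTop (nhds 0) := by
        have := h1.smul_const c₀
        simpa using this
      have h3 : Filter.Tendsto (fun _ : ℕ => cs n - nX (xs n - x₀)) Filter.atTop
          (nhds (cs n - nX (xs n - x₀))) := tendsto_const_nhds
      have := h3.add h2
      simpa using this
    exact hP.1.mem_of_tendsto htend (Filter.Eventually.of_forall hseq)
  refine ⟨x₀, ?_, ?_⟩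
  · exact hball₀ (hKA 0 (hlimK 1)).2
  · exact Set.mem_iInter.mpr fun n => (hKA n (hlimK (n+1))).1
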